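/- Let X be a finite group with E(X) = 1, and let I and J be subgroups of X such that I·F(X) and J·F(X) are nilpotent. Let p and q be distinct primes. Then [O_p(I), O_q(J)] = 1. -/

import Mathlib

/-- A subgroup is subnormal if it is a term of a finite chain of subgroups,
each normal in the next, ending at the whole group. -/
def Subgroup.IsSubnormalIn {G : Type*} [Group G] (H : Subgroup G) : Prop :=
  ∃ (n : ℕ) (c : Fin (n + 1) → Subgroup G),
    c 0 = H ∧ c (Fin.last n) = ⊤ ∧
    ∀ i : Fin n, c i.castSucc ≤ c i.succ ∧ ((c i.castSucc).subgroupOf (c i.succ)).Normal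

/-- A group is quasisimple if it is perfect and its quotient by its center is simple. -/
def IsQuasisimple (H : Type*) [Group H] : Prop :=
  (⁅(⊤ : Subgroup H), (⊤ : Subgroup H)⁆ = ⊤) ∧ IsSimpleGroup (H ⧸ Subgroup.center H)

/-- A component of a group is a quasisimple subnormal subgroup. -/
def Subgroup.IsComponent {G : Type*} [Group G] (K : Subgroup G) : Prop :=
  K.IsSubnormalIn ∧ IsQuasisimple K

/-- `sol G` : the subgroup generated by all normal solvable subgroups of `G`;
for finite `G` this is the largest normal solvable subgroup. -/
def sol (G : Type*) [Group G] : Subgroup G :=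
  Subgroup.closure {x : G | ∃ N : Subgroup G, N.Normal ∧ IsSolvable N ∧ x ∈ N}

instance sol_normal (G : Type*) [Group G] : (sol G).Normal := by
  constructor
  intro n hn g
  induction hn using Subgroup.closure_induction with
  | mem x hx =>
      obtain ⟨N, hN, hNs, hxN⟩ := hx
      exact Subgroup.subset_closure ⟨N, hN, hNs, hN.conj_mem x hxN g⟩
  | one => simpa using (sol G).one_mem
  | mul x y _ _ hx hy =>
      have : g * (x * y) * g⁻¹ = (g * x * g⁻¹) * (g * y * g⁻¹) := by group
      rw [this]; exact (sol G).mul_mem hx hy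
  | inv x _ hx =>
      have : g * x⁻¹ * g⁻¹ = (g * x * g⁻¹)⁻¹ := by group
      rw [this]; exact (sol G).inv_mem hx

/-- A sol-component of `G`: a perfect subnormal subgroup whose image in `G/sol(G)`
is a component of `G/sol(G)`. -/
def Subgroup.IsSolComponent {G : Type*} [Group G] (K : Subgroup G) : Prop :=
  ⁅K, K⁆ = K ∧ K.IsSubnormalIn ∧
    (K.map (QuotientGroup.mk' (sol G))).IsComponent

/-- The subgroup generated by the sol-components. -/
def layerSol (G : Type*) [Group G] : Subgroup G :=
  Subgroup.closure {x : G | ∃ K : Subgroup G, K.IsSolComponent ∧ x ∈ K}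

/-- `O*(G) = sol(G) · layerSol(G)`. -/
def Ostar (G : Type*) [Group G] : Subgroup G := sol G ⊔ layerSol G

/-- The Fitting subgroup: the subgroup generated by all nilpotent normal subgroups. -/
def fitting (G : Type*) [Group G] : Subgroup G :=
  Subgroup.closure {x : G | ∃ N : Subgroup G, N.Normal ∧ Group.IsNilpotent N ∧ x ∈ N}

/-- The layer `E(G)`: the subgroup generated by all components. -/
def layer (G : Type*) [Group G] : Subgroup G :=
  Subgroup.closure {x : G | ∃ K : Subgroup G, K.IsComponent ∧ x ∈ K}

/-- The generalized Fitting subgroup `F*(G) = F(G)E(G)`. -/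
def Fstar (G : Type*) [Group G] : Subgroup G := fitting G ⊔ layer G

/-- `O_p(G)` : the subgroup generated by all normal `p`-subgroups of `G`. -/
def pCore (p : ℕ) (G : Type*) [Group G] : Subgroup G :=
  Subgroup.closure {x : G | ∃ N : Subgroup G, N.Normal ∧ IsPGroup p N ∧ x ∈ N}

open scoped commutatorElement

/-! ### Auxiliary lemmas -/

section Auxiliary

open Subgroup Pointwise

variable {G : Type*} [Group G]

instance (priority := 100) finiteSubgroupInst [Finite G] : Finite (Subgroup G) :=
  Finite.of_injective (fun H => (H : Set G)) SetLike.coe_injective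

lemma coe_pow_eq_one {K : Subgroup G} {g : ↥K} {n : ℕ} (h : g ^ n = 1) : (g : G) ^ n = 1 := by
  rw [← Subgroup.coe_pow, h, Subgroup.coe_one]

lemma pow_eq_one_of_coe {K : Subgroup G} {g : ↥K} {n : ℕ} (h : (g : G) ^ n = 1) : g ^ n = 1 := by
  apply Subtype.ext
  rw [Subgroup.coe_pow, Subgroup.coe_one]
  exact h

/-- p-part decomposition of an element of a finite group. -/
lemma exists_p_part [Finite G] {p : ℕ} (hp : p.Prime) (x : G) :
    ∃ y z : G, x = y * z ∧ y ∈ Subgroup.zpowers x ∧ z ∈ Subgroup.zpowers x ∧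
      (∃ k : ℕ, y ^ p ^ k = 1) ∧ Nat.Coprime (orderOf z) p := by
  set n := orderOf x with hn
  have hnpos : 0 < n := orderOf_pos x
  set k := n.factorization p with hk
  set m := n / p ^ k with hm
  have hmul : p ^ k * m = n := Nat.ordProj_mul_ordCompl_eq_self n p
  have hcop : Nat.Coprime p m := Nat.coprime_ordCompl hp hnpos.ne'
  have hcop' : Nat.Coprime (p ^ k) m := hcop.pow_left k
  have hxn : x ^ (n : ℤ) = 1 := by
    rw [zpow_natCast, pow_orderOf_eq_one]
  have : IsCoprime (p ^ k : ℤ) (m : ℤ) := by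
    rw [Int.isCoprime_iff_gcd_eq_one, ← Nat.cast_pow, Int.gcd_natCast_natCast]
    exact hcop'
  obtain ⟨u, v, huv⟩ := this
  refine ⟨x ^ (v * m), x ^ (u * p ^ k), ?_, ⟨_, rfl⟩, ⟨_, rfl⟩, ?_, ?_⟩
  · have : (v * m + u * p ^ k : ℤ) = 1 := by linarith [huv]
    rw [← zpow_add, this, zpow_one]
  · refine ⟨k, ?_⟩
    have h1 : (x ^ (v * m : ℤ)) ^ (p ^ k : ℕ) = x ^ ((n : ℤ) * v) := by
      rw [← zpow_natCast, ← zpow_mul, ← hmul]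
      push_cast
      ring_nf
    rw [h1, zpow_mul, hxn, one_zpow]
  · have hzm : (x ^ (u * p ^ k : ℤ)) ^ m = 1 := by
      rw [← zpow_natCast, ← zpow_mul]
      have : (u * p ^ k * m : ℤ) = (n : ℤ) * u := by
        rw [← hmul]; push_cast; ring
      rw [this, zpow_mul, hxn, one_zpow]
    have hdvd : orderOf (x ^ (u * p ^ k : ℤ)) ∣ m := orderOf_dvd_of_pow_eq_one hzm
    exact Nat.Coprime.coprime_dvd_left hdvd hcop.symm

lemma comm_pow_right (a b : G) (h : Commute ⁅a, b⁆ b) (n : ℕ) : ⁅a, b ^ n⁆ = ⁅a, b⁆ ^ n := by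
  induction n with
  | zero => simp
  | succ n ih =>
    have key : ⁅a, b ^ (n + 1)⁆ = ⁅a, b⁆ * (b * ⁅a, b ^ n⁆ * b⁻¹) := by
      simp only [commutatorElement_def, pow_succ]
      group
    rw [key, ih, ((h.pow_left n).symm.eq : b * ⁅a, b⁆ ^ n = ⁅a, b⁆ ^ n * b)]
    simp [mul_assoc, pow_succ']

lemma comm_pow_left (a b : G) (h : Commute ⁅a, b⁆ a) (n : ℕ) : ⁅a ^ n, b⁆ = ⁅a, b⁆ ^ n := by
  induction n with
  | zero => simp
  | succ n ih =>
    have key : ⁅a ^ (n + 1), b⁆ = (a * ⁅a ^ n, b⁆ * a⁻¹) * ⁅a, b⁆ := by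
      simp only [commutatorElement_def, pow_succ]
      group
    rw [key, ih, ((h.pow_left n).symm.eq : a * ⁅a, b⁆ ^ n = ⁅a, b⁆ ^ n * a)]
    simp [mul_assoc, pow_succ]

/-- Every element of `pCore` lies in some normal `p`-subgroup. -/
lemma pCore_mem_exists {p : ℕ} {x : G} (hx : x ∈ pCore p G) :
    ∃ N : Subgroup G, N.Normal ∧ IsPGroup p N ∧ x ∈ N := by
  induction hx using Subgroup.closure_induction with
  | mem x hx => exact hx
  | one => exact ⟨⊥, inferInstance, IsPGroup.of_bot, one_mem _⟩
  | mul x y _ _ hx hy =>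
    obtain ⟨N₁, h1n, h1p, h1⟩ := hx
    obtain ⟨N₂, h2n, h2p, h2⟩ := hy
    haveI := h1n; haveI := h2n
    exact ⟨N₁ ⊔ N₂, inferInstance, h1p.to_sup_of_normal_right h2p,
      mul_mem (Subgroup.mem_sup_left h1) (Subgroup.mem_sup_right h2)⟩
  | inv x _ hx =>
    obtain ⟨N, hn, hp', h⟩ := hx
    exact ⟨N, hn, hp', inv_mem h⟩

lemma pCore_pow_eq_one {p : ℕ} {x : G} (hx : x ∈ pCore p G) : ∃ k : ℕ, x ^ p ^ k = 1 := by
  obtain ⟨N, _, hNp, hxN⟩ := pCore_mem_exists hx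
  obtain ⟨k, hk⟩ := hNp ⟨x, hxN⟩
  exact ⟨k, coe_pow_eq_one hk⟩

/-- A group whose commutator subgroup is central is nilpotent. -/
lemma isNilpotent_of_commutator_le_center (h : ⁅(⊤ : Subgroup G), ⊤⁆ ≤ Subgroup.center G) :
    Group.IsNilpotent G := by
  refine ⟨2, ?_⟩
  rw [eq_top_iff]
  intro x _
  show x ∈ Subgroup.upperCentralSeries G (1 + 1)
  rw [Subgroup.mem_upperCentralSeries_succ_iff]
  intro y
  have : ⁅x, y⁆ ∈ Subgroup.center G :=
    h (Subgroup.commutator_mem_commutator (mem_top x) (mem_top y))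
  simpa [Subgroup.upperCentralSeries_one, commutatorElement_def] using this

/-- In a finite nilpotent group, a `p`-element and a `q`-element commute when `p ≠ q`. -/
lemma commute_p_q [Finite G] (hG : Group.IsNilpotent G) {p q : ℕ}
    (hp : p.Prime) (hq : q.Prime) (hpq : p ≠ q) {x y : G}
    (hx : ∃ k : ℕ, x ^ p ^ k = 1) (hy : ∃ k : ℕ, y ^ q ^ k = 1) : Commute x y := by
  have hsyl : ∀ (r : ℕ) (_ : Fact r.Prime) (P : Sylow r G), (↑P : Subgroup G).Normal :=
    ((isNilpotent_of_finite_tfae (G := G)).out 0 3).mp hG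
  haveI hpf : Fact p.Prime := ⟨hp⟩
  haveI hqf : Fact q.Prime := ⟨hq⟩
  have hzp : ∀ (r : ℕ) (z : G), (∃ k : ℕ, z ^ r ^ k = 1) → IsPGroup r (Subgroup.zpowers z) := by
    intro r z hz g
    obtain ⟨k, hk⟩ := hz
    refine ⟨k, ?_⟩
    have h1 : orderOf (g : G) ∣ orderOf z := orderOf_dvd_of_mem_zpowers g.2
    have h2 : orderOf z ∣ r ^ k := orderOf_dvd_of_pow_eq_one hk
    have h3 : orderOf g ∣ r ^ k := by
      rw [← Subgroup.orderOf_coe]; exact h1.trans h2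
    exact orderOf_dvd_iff_pow_eq_one.mp h3
  obtain ⟨P, hPle⟩ := (hzp p x hx).exists_le_sylow
  obtain ⟨Q, hQle⟩ := (hzp q y hy).exists_le_sylow
  have hPn : (↑P : Subgroup G).Normal := hsyl p hpf P
  have hQn : (↑Q : Subgroup G).Normal := hsyl q hqf Q
  have hxP : x ∈ (P : Subgroup G) := hPle (Subgroup.mem_zpowers x)
  have hyQ : y ∈ (Q : Subgroup G) := hQle (Subgroup.mem_zpowers y)
  have hcP : ⁅x, y⁆ ∈ (P : Subgroup G) := by
    have : ⁅x, y⁆ = x * (y * x⁻¹ * y⁻¹) := by group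
    rw [this]
    exact mul_mem hxP (hPn.conj_mem x⁻¹ (inv_mem hxP) y)
  have hcQ : ⁅x, y⁆ ∈ (Q : Subgroup G) := by
    have : ⁅x, y⁆ = (x * y * x⁻¹) * y⁻¹ := by group
    rw [this]
    exact mul_mem (hQn.conj_mem y hyQ x) (inv_mem hyQ)
  obtain ⟨a, hca⟩ := P.isPGroup' ⟨⁅x, y⁆, hcP⟩
  obtain ⟨b, hcb⟩ := Q.isPGroup' ⟨⁅x, y⁆, hcQ⟩
  have hda : orderOf ⁅x, y⁆ ∣ p ^ a :=
    orderOf_dvd_of_pow_eq_one (coe_pow_eq_one hca)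
  have hdb : orderOf ⁅x, y⁆ ∣ q ^ b :=
    orderOf_dvd_of_pow_eq_one (coe_pow_eq_one hcb)
  have hcop : Nat.Coprime (p ^ a) (q ^ b) :=
    Nat.Coprime.pow a b ((Nat.coprime_primes hp hq).mpr hpq)
  have : orderOf ⁅x, y⁆ ∣ 1 := hcop ▸ Nat.dvd_gcd hda hdb
  exact commutatorElement_eq_one_iff_commute.mp
    (orderOf_eq_one_iff.mp (Nat.eq_one_of_dvd_one this))

lemma commute_p_coprime [Finite G] (hG : Group.IsNilpotent G) {p : ℕ} (hp : p.Prime)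
    {x : G} (hx : ∃ k : ℕ, x ^ p ^ k = 1) :
    ∀ (m : ℕ) (y : G), orderOf y = m → ¬ p ∣ m → Commute x y := by
  intro m
  induction m using Nat.strong_induction_on with
  | _ m ih =>
    intro y hym hpm
    rcases eq_or_ne m 1 with h1 | h1
    · have : y = 1 := orderOf_eq_one_iff.mp (h1 ▸ hym)
      exact this ▸ Commute.one_right x
    · obtain ⟨q, hq, hqm⟩ := Nat.exists_prime_and_dvd h1
      have hqp : p ≠ q := by rintro rfl; exact hpm hqm
      obtain ⟨u, v, huv, hu, hv, huk, hvcop⟩ := exists_p_part hq y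
      have hxu : Commute x u := commute_p_q hG hp hq hqp hx huk
      have hdvd : orderOf v ∣ m := hym ▸ orderOf_dvd_of_mem_zpowers hv
      have hxv : Commute x v := by
        refine ih (orderOf v) ?_ v rfl ?_
        · refine lt_of_le_of_ne (Nat.le_of_dvd (hym ▸ orderOf_pos y) hdvd) ?_
          rintro he
          have hqv : q ∣ orderOf v := he ▸ hqm
          have : q ∣ 1 := hvcop ▸ Nat.dvd_gcd hqv dvd_rfl
          exact hq.one_lt.ne' (Nat.eq_one_of_dvd_one this)
        · exact fun hpv => hpm (hpv.trans hdvd)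
      have : Commute x (u * v) := hxu.mul_right hxv
      rwa [← huv] at this

/-- In a finite nilpotent group, elements of coprime orders commute. -/
lemma commute_of_coprime_orderOf [Finite G] (hG : Group.IsNilpotent G) (x y : G)
    (h : Nat.Coprime (orderOf x) (orderOf y)) : Commute x y := by
  suffices H : ∀ (n : ℕ) (x y : G), orderOf x = n →
      Nat.Coprime (orderOf x) (orderOf y) → Commute x y from H _ x y rfl h
  intro n
  induction n using Nat.strong_induction_on with
  | _ n ih =>
    intro x y hxn hcop
    rcases eq_or_ne n 1 with h1 | h1
    · have : x = 1 := orderOf_eq_one_iff.mp (h1 ▸ hxn)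
      exact this ▸ Commute.one_left y
    · obtain ⟨p, hp, hpn⟩ := Nat.exists_prime_and_dvd h1
      have hpx : p ∣ orderOf x := hxn ▸ hpn
      obtain ⟨a, b, hab, ha, hb, hak, hbcop⟩ := exists_p_part hp x
      have hpy : ¬ p ∣ orderOf y := by
        intro hpy
        have : p ∣ 1 := hcop ▸ Nat.dvd_gcd hpx hpy
        exact hp.one_lt.ne' (Nat.eq_one_of_dvd_one this)
      have h1c : Commute a y := commute_p_coprime hG hp hak (orderOf y) y rfl hpy
      have hdvd : orderOf b ∣ n := hxn ▸ orderOf_dvd_of_mem_zpowers hb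
      have h2c : Commute b y := by
        refine ih (orderOf b) ?_ b y rfl ?_
        · refine lt_of_le_of_ne (Nat.le_of_dvd (hxn ▸ orderOf_pos x) hdvd) ?_
          rintro he
          have hpb : p ∣ orderOf b := he ▸ hpn
          have : p ∣ 1 := hbcop ▸ Nat.dvd_gcd hpb dvd_rfl
          exact hp.one_lt.ne' (Nat.eq_one_of_dvd_one this)
        · exact Nat.Coprime.coprime_dvd_left (hxn ▸ hdvd) hcop
      have : Commute (a * b) y := h1c.mul_left h2c
      rwa [← hab] at this

/-- Fitting's theorem (ambient form): the join of two nilpotent normal subgroups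
generating the whole group is nilpotent. -/
lemma fitting2_top {H : Type*} [Group H] [Finite H] (M N : Subgroup H)
    (hMn : M.Normal) (hNn : N.Normal)
    (hM : Group.IsNilpotent ↥M) (hN : Group.IsNilpotent ↥N) (hsup : M ⊔ N = ⊤) :
    Group.IsNilpotent H := by
  apply ((isNilpotent_of_finite_tfae (G := H)).out 3 0).mp
  intro p hp P
  -- In a nilpotent normal subgroup `K`, the set of `p`-torsion elements forms a
  -- normal (in `H`) `p`-subgroup containing all `p`-torsion elements of `K`.
  have key : ∀ (K : Subgroup H), K.Normal → Group.IsNilpotent ↥K →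
      ∃ R : Subgroup H, R.Normal ∧ IsPGroup p R ∧ R ≤ K ∧
        (∀ x : H, x ∈ K → (∃ k : ℕ, x ^ p ^ k = 1) → x ∈ R) := by
    intro K hKn hKnil
    obtain ⟨PK⟩ := (inferInstance : Nonempty (Sylow p ↥K))
    have hPKn : (↑PK : Subgroup ↥K).Normal := by
      have htfae := (isNilpotent_of_finite_tfae (G := ↥K)).out 0 3
      exact htfae.mp hKnil p hp PK
    haveI := Sylow.unique_of_normal PK hPKn
    have hmem : ∀ x : H, x ∈ Subgroup.map K.subtype ↑PK ↔
        (x ∈ K ∧ ∃ k : ℕ, x ^ p ^ k = 1) := by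
      intro x
      constructor
      · rintro ⟨g, hg, rfl⟩
        refine ⟨g.2, ?_⟩
        obtain ⟨k, hk⟩ := PK.isPGroup' ⟨g, hg⟩
        exact ⟨k, coe_pow_eq_one (coe_pow_eq_one hk)⟩
      · rintro ⟨hxK, hk⟩
        set g : ↥K := ⟨x, hxK⟩ with hg
        have hzp : IsPGroup p (Subgroup.zpowers g) := by
          intro w
          obtain ⟨k, hk⟩ := hk
          refine ⟨k, ?_⟩
          have h1 : orderOf (w : ↥K) ∣ orderOf g := orderOf_dvd_of_mem_zpowers w.2
          have h2 : orderOf g ∣ p ^ k := by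
            apply orderOf_dvd_of_pow_eq_one
            exact pow_eq_one_of_coe hk
          have h3 : orderOf w ∣ p ^ k := by
            rw [← Subgroup.orderOf_coe]; exact h1.trans h2
          exact orderOf_dvd_iff_pow_eq_one.mp h3
        obtain ⟨Q, hQle⟩ := hzp.exists_le_sylow
        have hQ : Q = PK := Subsingleton.elim _ _
        exact ⟨g, hQ ▸ hQle (Subgroup.mem_zpowers g), rfl⟩
    refine ⟨Subgroup.map K.subtype ↑PK, ?_, PK.isPGroup'.map _, ?_, ?_⟩
    · constructor
      intro n hn g
      rw [hmem] at hn ⊢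
      obtain ⟨hnK, k, hk⟩ := hn
      refine ⟨hKn.conj_mem n hnK g, k, ?_⟩
      have : (g * n * g⁻¹) ^ p ^ k = g * n ^ p ^ k * g⁻¹ := by
        simpa [MulAut.conj_apply] using (map_pow (MulAut.conj g) n (p ^ k)).symm
      rw [this, hk, mul_one, mul_inv_cancel]
    · rintro x ⟨g, _, rfl⟩
      exact g.2
    · intro x hxK hk
      exact (hmem x).mpr ⟨hxK, hk⟩
  obtain ⟨RM, hRMn, hRMp, hRMle, hRMfull⟩ := key M hMn hM
  obtain ⟨RN, hRNn, hRNp, hRNle, hRNfull⟩ := key N hNn hN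
  haveI := hRMn; haveI := hRNn
  set R : Subgroup H := RM ⊔ RN with hR
  have hRn : R.Normal := inferInstance
  haveI := hRn
  have hRp : IsPGroup p R := hRMp.to_sup_of_normal_right hRNp
  -- the quotient by R has order coprime to p
  have hnodvd : ¬ p ∣ Nat.card (H ⧸ R) := by
    intro hdvd
    have himg : ∀ (K : Subgroup H), K.Normal →
        (∃ Rk : Subgroup H, Rk ≤ R ∧ (∀ x : H, x ∈ K → (∃ k : ℕ, x ^ p ^ k = 1) → x ∈ Rk)) →
        ¬ p ∣ Nat.card ↥(Subgroup.map (QuotientGroup.mk' R) K) := by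
      intro K hKn hfull hpdvd
      haveI : Fintype ↥(Subgroup.map (QuotientGroup.mk' R) K) := Fintype.ofFinite _
      rw [Nat.card_eq_fintype_card] at hpdvd
      obtain ⟨gq, hgq⟩ := exists_prime_orderOf_dvd_card p hpdvd
      obtain ⟨m, hmK, hm⟩ := gq.2
      obtain ⟨m₁, m₂, hm12, hm1z, hm2z, hm1t, hm2c⟩ := exists_p_part hp.out m
      obtain ⟨Rk, hRkle, hRkfull⟩ := hfull
      have hm1K : m₁ ∈ K := by
        obtain ⟨i, hi⟩ := hm1z
        exact hi ▸ zpow_mem hmK i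
      have hm1R : m₁ ∈ R := hRkle (hRkfull m₁ hm1K hm1t)
      have hm2K : m₂ ∈ K := by
        obtain ⟨i, hi⟩ := hm2z
        exact hi ▸ zpow_mem hmK i
      have hq1 : QuotientGroup.mk' R m₁ = 1 := by
        rwa [← MonoidHom.mem_ker, QuotientGroup.ker_mk']
      have hqm : QuotientGroup.mk' R m = QuotientGroup.mk' R m₂ := by
        rw [hm12, map_mul, hq1, one_mul]
      have hord : orderOf (gq : H ⧸ R) ∣ orderOf m₂ := by
        rw [← hm, hqm]
        apply orderOf_dvd_of_pow_eq_one
        rw [← map_pow, pow_orderOf_eq_one, map_one]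
      rw [Subgroup.orderOf_coe, hgq] at hord
      have : p ∣ 1 := hm2c ▸ Nat.dvd_gcd hord dvd_rfl
      exact hp.out.one_lt.ne' (Nat.eq_one_of_dvd_one this)
    set π := QuotientGroup.mk' R with hπ
    have hπs : Function.Surjective π := QuotientGroup.mk'_surjective R
    set Mb := Subgroup.map π M with hMb
    set Nb := Subgroup.map π N with hNb
    haveI hMbn : Mb.Normal := hMn.map π hπs
    haveI hNbn : Nb.Normal := hNn.map π hπs
    have hbsup : Mb ⊔ Nb = ⊤ := by
      rw [hMb, hNb, ← Subgroup.map_sup, hsup, Subgroup.map_top_of_surjective π hπs]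
    -- card (H ⧸ R) divides card Mb * card Nb
    have hcard : Nat.card (H ⧸ R) ∣ Nat.card ↥Mb * Nat.card ↥Nb := by
      have h1 : Nat.card (H ⧸ R) = Nat.card ((H ⧸ R) ⧸ Nb) * Nat.card ↥Nb :=
        Subgroup.card_eq_card_quotient_mul_card_subgroup Nb
      have hψ : Function.Surjective ((QuotientGroup.mk' Nb).comp Mb.subtype) := by
        intro c
        induction c using QuotientGroup.induction_on with
        | H h =>
          have : h ∈ (↑(Mb ⊔ Nb) : Set (H ⧸ R)) := by rw [hbsup]; trivial
          rw [Subgroup.mul_normal] at this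
          obtain ⟨mb, hmb, nb, hnb, rfl⟩ := this
          refine ⟨⟨mb, hmb⟩, ?_⟩
          have h1 : QuotientGroup.mk' Nb nb = 1 := by
            rw [← MonoidHom.mem_ker, QuotientGroup.ker_mk']
            exact hnb
          simp only [MonoidHom.comp_apply, QuotientGroup.mk'_apply, Subgroup.coe_subtype,
            QuotientGroup.mk_mul]
          have h2 : (QuotientGroup.mk nb : (H ⧸ R) ⧸ Nb) = 1 := h1
          rw [h2, mul_one]
      have h2 : Nat.card ((H ⧸ R) ⧸ Nb) ∣ Nat.card ↥Mb :=
        Subgroup.card_dvd_of_surjective _ hψ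
      rw [h1]
      exact mul_dvd_mul h2 dvd_rfl
    rcases (Nat.Prime.dvd_mul hp.out).mp (hdvd.trans hcard) with hc | hc
    · exact himg M hMn ⟨RM, le_sup_left, hRMfull⟩ hc
    · exact himg N hNn ⟨RN, le_sup_right, hRNfull⟩ hc
  -- every p-torsion element of H lies in R
  have crux : ∀ x : H, (∃ k : ℕ, x ^ p ^ k = 1) → x ∈ R := by
    rintro x ⟨k, hk⟩
    have h1 : orderOf (QuotientGroup.mk' R x) ∣ p ^ k := by
      apply orderOf_dvd_of_pow_eq_one
      rw [← map_pow, hk, map_one]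
    have h2 : orderOf (QuotientGroup.mk' R x) ∣ Nat.card (H ⧸ R) :=
      orderOf_dvd_natCard _
    have hcop : Nat.Coprime (p ^ k) (Nat.card (H ⧸ R)) :=
      Nat.Coprime.pow_left k ((hp.out.coprime_iff_not_dvd).mpr hnodvd)
    have : orderOf (QuotientGroup.mk' R x) ∣ 1 := hcop ▸ Nat.dvd_gcd h1 h2
    have : QuotientGroup.mk' R x = 1 := orderOf_eq_one_iff.mp (Nat.eq_one_of_dvd_one this)
    rwa [← MonoidHom.mem_ker, QuotientGroup.ker_mk'] at this
  have hPR : (P : Subgroup H) ≤ R := by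
    intro x hx
    obtain ⟨k, hk⟩ := P.isPGroup' ⟨x, hx⟩
    exact crux x ⟨k, coe_pow_eq_one hk⟩
  have : R = ↑P := P.is_maximal' hRp hPR
  rw [← this]
  exact hRn

/-- Fitting's theorem: the join of two nilpotent normal subgroups is nilpotent. -/
lemma fitting2 {H : Type*} [Group H] [Finite H] (M N : Subgroup H)
    (hMn : M.Normal) (hNn : N.Normal)
    (hM : Group.IsNilpotent ↥M) (hN : Group.IsNilpotent ↥N) :
    Group.IsNilpotent ↥(M ⊔ N) := by
  have hM' : (M.subgroupOf (M ⊔ N)).Normal := hMn.subgroupOf _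
  have hN' : (N.subgroupOf (M ⊔ N)).Normal := hNn.subgroupOf _
  have hMnil : Group.IsNilpotent ↥(M.subgroupOf (M ⊔ N)) := by
    haveI := hM
    exact nilpotent_of_mulEquiv (Subgroup.subgroupOfEquivOfLe le_sup_left).symm
  have hNnil : Group.IsNilpotent ↥(N.subgroupOf (M ⊔ N)) := by
    haveI := hN
    exact nilpotent_of_mulEquiv (Subgroup.subgroupOfEquivOfLe le_sup_right).symm
  have hsup' : M.subgroupOf (M ⊔ N) ⊔ N.subgroupOf (M ⊔ N) = ⊤ := by
    apply Subgroup.map_injective (M ⊔ N).subtype_injective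
    rw [Subgroup.map_sup, Subgroup.subgroupOf_map_subtype, Subgroup.subgroupOf_map_subtype,
      ← MonoidHom.range_eq_map, Subgroup.subtype_range,
      inf_of_le_left (le_sup_left : M ≤ M ⊔ N), inf_of_le_left (le_sup_right : N ≤ M ⊔ N)]
  exact fitting2_top _ _ hM' hN' hMnil hNnil hsup'

/-- `L` is a nilpotent subgroup of `K` normalized by `K`. -/
def NilpotentNormalIn {X : Type*} [Group X] (K L : Subgroup X) : Prop :=
  L ≤ K ∧ Group.IsNilpotent ↥L ∧ ∀ g ∈ K, ∀ x ∈ L, g * x * g⁻¹ ∈ L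

lemma nilpotentNormalIn_sup {X : Type*} [Group X] [Finite X] {K L₁ L₂ : Subgroup X}
    (h1 : NilpotentNormalIn K L₁) (h2 : NilpotentNormalIn K L₂) :
    NilpotentNormalIn K (L₁ ⊔ L₂) := by
  obtain ⟨h1le, h1nil, h1conj⟩ := h1
  obtain ⟨h2le, h2nil, h2conj⟩ := h2
  refine ⟨sup_le h1le h2le, ?_, ?_⟩
  · have hn1 : (L₁.subgroupOf K).Normal :=
      (Subgroup.normal_subgroupOf_iff h1le).mpr (fun h g hh hg => h1conj g hg h hh)
    have hn2 : (L₂.subgroupOf K).Normal :=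
      (Subgroup.normal_subgroupOf_iff h2le).mpr (fun h g hh hg => h2conj g hg h hh)
    have hnil1 : Group.IsNilpotent ↥(L₁.subgroupOf K) := by
      haveI := h1nil
      exact nilpotent_of_mulEquiv (Subgroup.subgroupOfEquivOfLe h1le).symm
    have hnil2 : Group.IsNilpotent ↥(L₂.subgroupOf K) := by
      haveI := h2nil
      exact nilpotent_of_mulEquiv (Subgroup.subgroupOfEquivOfLe h2le).symm
    have hfit := fitting2 (L₁.subgroupOf K) (L₂.subgroupOf K) hn1 hn2 hnil1 hnil2
    have heq : L₁.subgroupOf K ⊔ L₂.subgroupOf K = (L₁ ⊔ L₂).subgroupOf K := by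
      apply Subgroup.map_injective K.subtype_injective
      rw [Subgroup.map_sup, Subgroup.subgroupOf_map_subtype, Subgroup.subgroupOf_map_subtype,
        Subgroup.subgroupOf_map_subtype, inf_of_le_left h1le, inf_of_le_left h2le,
        inf_of_le_left (sup_le h1le h2le)]
    rw [heq] at hfit
    haveI := hfit
    exact nilpotent_of_mulEquiv (Subgroup.subgroupOfEquivOfLe (sup_le h1le h2le))
  · intro g hg x hx
    have hmap : Subgroup.map (MulAut.conj g).toMonoidHom (L₁ ⊔ L₂) ≤ L₁ ⊔ L₂ := by
      rw [Subgroup.map_sup]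
      apply sup_le
      · rintro y ⟨z, hz, rfl⟩
        exact Subgroup.mem_sup_left (by simpa [MulAut.conj_apply] using h1conj g hg z hz)
      · rintro y ⟨z, hz, rfl⟩
        exact Subgroup.mem_sup_right (by simpa [MulAut.conj_apply] using h2conj g hg z hz)
    have : (MulAut.conj g).toMonoidHom x ∈ Subgroup.map (MulAut.conj g).toMonoidHom (L₁ ⊔ L₂) :=
      Subgroup.mem_map_of_mem _ hx
    simpa [MulAut.conj_apply] using hmap this

lemma NilpotentNormalIn.conj {X : Type*} [Group X] {K N : Subgroup X}
    (h : NilpotentNormalIn K N) (g : X)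
    (hgK : ∀ x ∈ K, g * x * g⁻¹ ∈ K) (hgK' : ∀ x ∈ K, g⁻¹ * x * g ∈ K) :
    NilpotentNormalIn K (Subgroup.map (MulAut.conj g).toMonoidHom N) := by
  obtain ⟨hNle, hNnil, hNconj⟩ := h
  refine ⟨?_, ?_, ?_⟩
  · rintro y ⟨z, hz, rfl⟩
    simpa [MulAut.conj_apply] using hgK z (hNle hz)
  · haveI := hNnil
    exact nilpotent_of_mulEquiv (Subgroup.equivMapOfInjective N _ (MulAut.conj g).injective)
  · intro h hh y hy
    obtain ⟨z, hz, rfl⟩ := hy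
    have hg' : g⁻¹ * h * g ∈ K := hgK' h hh
    have inner : (g⁻¹ * h * g) * z * (g⁻¹ * h * g)⁻¹ ∈ N := hNconj _ hg' z hz
    refine ⟨_, inner, ?_⟩
    simp only [MulEquiv.coe_toMonoidHom, MulAut.conj_apply]
    group

lemma exists_maxnilp {X : Type*} [Group X] [Finite X] (K : Subgroup X) :
    ∃ N : Subgroup X, NilpotentNormalIn K N ∧ ∀ L, NilpotentNormalIn K L → L ≤ N := by
  have hbot : NilpotentNormalIn K ⊥ := by
    refine ⟨bot_le, ?_, ?_⟩
    · refine ⟨1, ?_⟩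
      rw [Subgroup.upperCentralSeries_one, eq_top_iff]
      intro x _
      rw [Subgroup.mem_center_iff]
      intro g
      exact Subsingleton.elim _ _
    · intro g _ x hx
      rw [Subgroup.mem_bot] at hx
      simp [hx]
  set s : Set (Subgroup X) := {L | NilpotentNormalIn K L} with hs
  obtain ⟨N, hNs, hNmax⟩ := Set.Finite.exists_maximalFor (fun L' : Subgroup X => Nat.card L') s
    (Set.toFinite s) ⟨⊥, hbot⟩
  refine ⟨N, hNs, ?_⟩
  intro L hLs
  have hsup : NilpotentNormalIn K (L ⊔ N) := nilpotentNormalIn_sup hLs hNs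
  have hcardle : Nat.card ↥N ≤ Nat.card ↥(L ⊔ N) := Subgroup.card_le_of_le le_sup_right
  have hcards := hNmax hsup hcardle
  have hNe : N = L ⊔ N := Subgroup.eq_of_le_of_card_ge le_sup_right hcards
  exact le_sup_left.trans hNe.ge

lemma climb {X : Type*} [Group X] [Finite X] (C Z : Subgroup X) (hC : C.Normal)
    (hZ : ∀ N : Subgroup X, N.Normal → Group.IsNilpotent ↥N → N ≤ C → N ≤ Z)
    (D : Subgroup X) (hD : D.IsSubnormalIn) (hDC : D ≤ C)
    (hnil : Group.IsNilpotent ↥D) : D ≤ Z := by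
  obtain ⟨n, c, hc0, hclast, hstep⟩ := hD
  have hKmono : ∀ i : Fin n, (c i.castSucc ⊓ C) ≤ (c i.succ ⊓ C) :=
    fun i => inf_le_inf_right C (hstep i).1
  have hKconj : ∀ i : Fin n, ∀ g ∈ c i.succ ⊓ C, ∀ x ∈ c i.castSucc ⊓ C,
      g * x * g⁻¹ ∈ c i.castSucc ⊓ C := by
    intro i g hg x hx
    rw [Subgroup.mem_inf] at hg hx ⊢
    exact ⟨(Subgroup.normal_subgroupOf_iff (hstep i).1).mp (hstep i).2 x g hx.1 hg.1,
      hC.conj_mem x hx.2 g⟩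
  have main : ∀ i : Fin (n + 1), ∃ N : Subgroup X, NilpotentNormalIn (c i ⊓ C) N ∧ D ≤ N ∧
      (∀ L, NilpotentNormalIn (c i ⊓ C) L → L ≤ N) := by
    intro i
    induction i using Fin.induction with
    | zero =>
      obtain ⟨N, hN, hmax⟩ := exists_maxnilp (c 0 ⊓ C)
      refine ⟨N, hN, ?_, hmax⟩
      apply hmax
      refine ⟨?_, hnil, ?_⟩
      · rw [hc0]; exact le_inf le_rfl hDC
      · intro g hg x hx
        rw [hc0, Subgroup.mem_inf] at hg
        exact mul_mem (mul_mem hg.1 hx) (inv_mem hg.1)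
    | succ i ih =>
      obtain ⟨N, hN, hDN, hNmax⟩ := ih
      obtain ⟨N', hN', hmax'⟩ := exists_maxnilp (c i.succ ⊓ C)
      refine ⟨N', hN', hDN.trans (hmax' _ ?_), hmax'⟩
      obtain ⟨hNle, hNnil, hNconj⟩ := hN
      refine ⟨hNle.trans (hKmono i), hNnil, ?_⟩
      intro g hg x hx
      have hconjN := NilpotentNormalIn.conj ⟨hNle, hNnil, hNconj⟩ g
        (fun y hy => hKconj i g hg y hy)
        (fun y hy => by
          have := hKconj i g⁻¹ (inv_mem hg) y hy
          simpa using this)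
      have hle := hNmax _ hconjN
      have hmm : (MulAut.conj g).toMonoidHom x ∈ Subgroup.map (MulAut.conj g).toMonoidHom N :=
        Subgroup.mem_map_of_mem _ hx
      simpa [MulAut.conj_apply] using hle hmm
  obtain ⟨N, hN, hDN, hNmax⟩ := main (Fin.last n)
  rw [hclast, top_inf_eq] at hN hNmax
  obtain ⟨hNle, hNnil, hNconj⟩ := hN
  have hNnormal : N.Normal := by
    constructor
    intro x hx g
    have hconjN := NilpotentNormalIn.conj ⟨hNle, hNnil, hNconj⟩ g
      (fun y hy => hC.conj_mem y hy g)
      (fun y hy => by simpa using hC.conj_mem y hy g⁻¹)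
    have hle := hNmax _ hconjN
    have : (MulAut.conj g).toMonoidHom x ∈ Subgroup.map (MulAut.conj g).toMonoidHom N :=
      Subgroup.mem_map_of_mem _ hx
    simpa [MulAut.conj_apply] using hle this
  exact hDN.trans (hZ N hNnormal hNnil hNle)

lemma isSubnormalIn_top {X : Type*} [Group X] : (⊤ : Subgroup X).IsSubnormalIn :=
  ⟨0, fun _ => ⊤, rfl, rfl, fun i => i.elim0⟩

lemma isSubnormalIn_cons {X : Type*} [Group X] {H D : Subgroup X} (hHD : H ≤ D)
    (hn : ∀ g ∈ D, ∀ x ∈ H, g * x * g⁻¹ ∈ H) (hD : D.IsSubnormalIn) : H.IsSubnormalIn := by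
  obtain ⟨n, c, hc0, hclast, hstep⟩ := hD
  refine ⟨n + 1, Fin.cases H c, by simp, ?_, ?_⟩
  · rw [← Fin.succ_last]
    simp only [Fin.cases_succ]
    exact hclast
  · intro i
    induction i using Fin.cases with
    | zero =>
      simp only [Fin.castSucc_zero, Fin.cases_zero, Fin.cases_succ]
      subst hc0
      exact ⟨hHD, (Subgroup.normal_subgroupOf_iff hHD).mpr (fun h g hh hg => hn g hg h hh)⟩
    | succ j =>
      simp only [← Fin.succ_castSucc, Fin.cases_succ]
      exact hstep j

lemma isSubnormalIn_of_normal {X : Type*} [Group X] (H : Subgroup X) (h : H.Normal) :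
    H.IsSubnormalIn :=
  isSubnormalIn_cons le_top (fun g _ x hx => h.conj_mem x hx g) isSubnormalIn_top

instance fitting_normal (G : Type*) [Group G] : (fitting G).Normal := by
  constructor
  intro n hn g
  induction hn using Subgroup.closure_induction with
  | mem x hx =>
      obtain ⟨N, hN, hNs, hxN⟩ := hx
      exact Subgroup.subset_closure ⟨N, hN, hNs, hN.conj_mem x hxN g⟩
  | one => simpa using (fitting G).one_mem
  | mul x y _ _ hx hy =>
      have : g * (x * y) * g⁻¹ = (g * x * g⁻¹) * (g * y * g⁻¹) := by group
      rw [this]; exact (fitting G).mul_mem hx hy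
  | inv x _ hx =>
      have : g * x⁻¹ * g⁻¹ = (g * x * g⁻¹)⁻¹ := by group
      rw [this]; exact (fitting G).inv_mem hx

lemma commutator_mul_central {X : Type*} [Group X] {a b u v : X}
    (h1 : Commute u b) (h2 : Commute u v) (h3 : Commute v a) :
    ⁅a * u, b * v⁆ = ⁅a, b⁆ := by
  have huc : u * (b * v) * u⁻¹ = b * v := by
    calc u * (b * v) * u⁻¹ = (u * b) * v * u⁻¹ := by group
    _ = (b * u) * v * u⁻¹ := by rw [h1.eq]
    _ = b * (u * v) * u⁻¹ := by group
    _ = b * (v * u) * u⁻¹ := by rw [h2.eq]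
    _ = b * v := by group
  have hvc : v * a⁻¹ = a⁻¹ * v := (h3.inv_right).eq
  calc ⁅a * u, b * v⁆ = a * (u * (b * v) * u⁻¹) * a⁻¹ * v⁻¹ * b⁻¹ := by
        simp only [commutatorElement_def, mul_inv_rev]; group
  _ = a * (b * v) * a⁻¹ * v⁻¹ * b⁻¹ := by rw [huc]
  _ = a * b * (v * a⁻¹) * v⁻¹ * b⁻¹ := by group
  _ = a * b * (a⁻¹ * v) * v⁻¹ * b⁻¹ := by rw [hvc]
  _ = ⁅a, b⁆ := by simp only [commutatorElement_def]; group

lemma conj_mem_commutator {X : Type*} [Group X] {D : Subgroup X} {g : X}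
    (hgD : ∀ y ∈ D, g * y * g⁻¹ ∈ D) {x : X} (hx : x ∈ ⁅D, D⁆) : g * x * g⁻¹ ∈ ⁅D, D⁆ := by
  have h1 : Subgroup.map (MulAut.conj g).toMonoidHom D ≤ D := by
    rintro y ⟨z, hz, rfl⟩
    simpa [MulAut.conj_apply] using hgD z hz
  have h2 : Subgroup.map (MulAut.conj g).toMonoidHom ⁅D, D⁆ ≤ ⁅D, D⁆ := by
    rw [Subgroup.map_commutator]
    exact Subgroup.commutator_mono h1 h1
  simpa [MulAut.conj_apply] using h2 (Subgroup.mem_map_of_mem _ hx)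

lemma isSimpleGroup_of_mulEquiv {A B : Type*} [Group A] [Group B] (e : A ≃* B)
    (h : IsSimpleGroup B) : IsSimpleGroup A := by
  haveI : Nontrivial B := h.toNontrivial
  haveI : Nontrivial A := e.toEquiv.nontrivial
  constructor
  intro H hH
  have hmapn : (H.map e.toMonoidHom).Normal := hH.map e.toMonoidHom e.surjective
  rcases h.eq_bot_or_eq_top_of_normal _ hmapn with hb | ht
  · left
    exact Subgroup.map_injective e.injective (hb.trans (Subgroup.map_bot e.toMonoidHom).symm)
  · right
    exact Subgroup.map_injective e.injective
      (ht.trans (Subgroup.map_top_of_surjective e.toMonoidHom e.surjective).symm)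

/-- The key structural fact: in a finite group with trivial layer, the centralizer of the
Fitting subgroup is contained in the Fitting subgroup. -/
theorem centralizer_fitting_le {X : Type*} [Group X] [Finite X] (hE : layer X = ⊥) :
    Subgroup.centralizer (fitting X : Set X) ≤ fitting X := by
  set F := fitting X with hF
  set Cz := Subgroup.centralizer (F : Set X) with hCzdef
  show Cz ≤ F
  have hcomm : ∀ c ∈ Cz, ∀ f ∈ F, c * f = f * c := by
    intro c hc f hf
    exact (Subgroup.mem_centralizer_iff.mp hc f hf).symm
  have hCzn : Cz.Normal := by
    constructor
    intro n hn g
    rw [hCzdef, Subgroup.mem_centralizer_iff] at hn ⊢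
    intro h hh
    have hg : g⁻¹ * h * g ∈ F := by
      have := (fitting_normal X).conj_mem h hh g⁻¹
      simpa using this
    have hnh := hn _ hg
    calc h * (g * n * g⁻¹) = g * ((g⁻¹ * h * g) * n) * g⁻¹ := by group
    _ = g * (n * (g⁻¹ * h * g)) * g⁻¹ := by rw [hnh]
    _ = g * n * g⁻¹ * h := by group
  by_contra hnle
  set Z := Cz ⊓ F with hZdef
  have hZn : Z.Normal := by
    constructor
    intro n hn g
    rw [hZdef, Subgroup.mem_inf] at hn ⊢
    exact ⟨hCzn.conj_mem _ hn.1 g, (fitting_normal X).conj_mem _ hn.2 g⟩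
  have hZC : Z ≤ Cz := inf_le_left
  have hZcent : ∀ z ∈ Z, ∀ c ∈ Cz, z * c = c * z := by
    intro z hz c hc
    exact (hcomm c hc z hz.2).symm
  have hkey : ∀ N : Subgroup X, N.Normal → Group.IsNilpotent ↥N → N ≤ Cz → N ≤ Z := by
    intro N hNn hNnil hNC
    refine le_inf hNC ?_
    intro x hx
    exact Subgroup.subset_closure ⟨N, hNn, hNnil, hx⟩
  have hZlt : Z < Cz := by
    refine lt_of_le_of_ne inf_le_left ?_
    intro he
    exact hnle (le_of_eq he.symm |>.trans inf_le_right)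
  set 𝒮 : Set (Subgroup X) := {D | D.IsSubnormalIn ∧ Z < D ∧ D ≤ Cz} with h𝒮
  have hCzS : Cz ∈ 𝒮 := ⟨isSubnormalIn_of_normal Cz hCzn, hZlt, le_rfl⟩
  obtain ⟨D, hDS, hDmin⟩ := Set.Finite.exists_minimalFor
    (fun L : Subgroup X => Nat.card L) 𝒮 (Set.toFinite _) ⟨Cz, hCzS⟩
  obtain ⟨hDsub, hZD, hDC⟩ := hDS
  have minNorm : ∀ M : Subgroup X, M ≤ D → Z ≤ M →
      (∀ d ∈ D, ∀ m ∈ M, d * m * d⁻¹ ∈ M) → M = Z ∨ M = D := by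
    intro M hMD hZM hconj
    rcases eq_or_lt_of_le hZM with he | hlt
    · exact Or.inl he.symm
    · right
      have hMS : M ∈ 𝒮 := ⟨isSubnormalIn_cons hMD hconj hDsub, hlt, hMD.trans hDC⟩
      have h1 := hDmin hMS (Subgroup.card_le_of_le hMD)
      exact Subgroup.eq_of_le_of_card_ge hMD h1
  set K := ⁅D, D⁆ with hK
  have hcommDle : K ≤ D := Subgroup.commutator_le.mpr fun g hg h hh =>
    mul_mem (mul_mem (mul_mem hg hh) (inv_mem hg)) (inv_mem hh)
  have hconjKZ : ∀ d ∈ D, ∀ m ∈ K ⊔ Z, d * m * d⁻¹ ∈ K ⊔ Z := by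
    intro d hd m hm
    have hmapK : Subgroup.map (MulAut.conj d).toMonoidHom K ≤ K := by
      rw [hK, Subgroup.map_commutator]
      have hDD : Subgroup.map (MulAut.conj d).toMonoidHom D ≤ D := by
        rintro y ⟨z, hz, rfl⟩
        simpa [MulAut.conj_apply] using mul_mem (mul_mem hd hz) (inv_mem hd)
      exact Subgroup.commutator_mono hDD hDD
    have hmapZ : Subgroup.map (MulAut.conj d).toMonoidHom Z ≤ Z := by
      rintro y ⟨z, hz, rfl⟩
      simpa [MulAut.conj_apply] using hZn.conj_mem z hz d
    have hmem : (MulAut.conj d).toMonoidHom m ∈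
        Subgroup.map (MulAut.conj d).toMonoidHom (K ⊔ Z) := Subgroup.mem_map_of_mem _ hm
    rw [Subgroup.map_sup] at hmem
    have := (sup_le (hmapK.trans le_sup_left) (hmapZ.trans le_sup_right)) hmem
    simpa [MulAut.conj_apply] using this
  rcases minNorm (K ⊔ Z) (sup_le hcommDle hZD.le) le_sup_right hconjKZ with hKZ | hKZ
  · -- case 1 : ⁅D,D⁆ ≤ Z, so D is nilpotent, contradiction via climb
    have hKle : K ≤ Z := le_sup_left.trans hKZ.le
    have hDnil : Group.IsNilpotent ↥D := by
      apply isNilpotent_of_commutator_le_center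
      intro w hw
      rw [Subgroup.mem_center_iff]
      intro g
      have hwZ : (w : X) ∈ Z := by
        apply hKle
        rw [hK]
        have hmapc : Subgroup.map D.subtype ⁅(⊤ : Subgroup ↥D), ⊤⁆ = ⁅D, D⁆ := by
          rw [Subgroup.map_commutator, ← MonoidHom.range_eq_map, Subgroup.subtype_range]
        exact hmapc ▸ Subgroup.mem_map_of_mem _ hw
      apply Subtype.ext
      push_cast
      exact (hZcent _ hwZ _ (hDC g.2)).symm
    have hDZ : D ≤ Z := climb Cz Z hCzn hkey D hDsub hDC hDnil
    exact absurd hDZ hZD.not_ge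
  · -- case 2 : K ⊔ Z = D, construct a component
    haveI hZDn : (Z.subgroupOf D).Normal := Subgroup.normal_subgroupOf
    have hKD : K ≤ D := hcommDle
    have hKCz : K ≤ Cz := hKD.trans hDC
    have hKnebot : K ≠ ⊥ := by
      intro hbot
      rw [hbot, bot_sup_eq] at hKZ
      exact hZD.ne hKZ
    have hKsub : K.IsSubnormalIn := by
      apply isSubnormalIn_cons hKD ?_ hDsub
      intro g hg x hx
      exact conj_mem_commutator (fun y hy => mul_mem (mul_mem hg hy) (inv_mem hg)) hx
    -- perfectness of K
    have hcommKK : ⁅K, K⁆ = K := by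
      refine le_antisymm (Subgroup.commutator_le.mpr fun g hg h hh =>
        Subgroup.commutator_mem_commutator (hcommDle hg) (hcommDle hh)) ?_
      conv_lhs => rw [hK]
      apply Subgroup.commutator_le.mpr
      intro g hg h hh
      have hgm : g ∈ (K : Set X) * (Z : Set X) := by rw [← Subgroup.mul_normal, hKZ]; exact hg
      have hhm : h ∈ (K : Set X) * (Z : Set X) := by rw [← Subgroup.mul_normal, hKZ]; exact hh
      obtain ⟨k₁, hk₁, z₁, hz₁, rfl⟩ := hgm
      obtain ⟨k₂, hk₂, z₂, hz₂, rfl⟩ := hhm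
      have e : ⁅k₁ * z₁, k₂ * z₂⁆ = ⁅k₁, k₂⁆ := by
        refine commutator_mul_central ?_ ?_ ?_
        · exact (hZcent _ hz₁ _ (hKCz hk₂))
        · exact (hZcent _ hz₁ _ (hZC hz₂))
        · exact (hZcent _ hz₂ _ (hKCz hk₁))
      rw [e]
      exact Subgroup.commutator_mem_commutator hk₁ hk₂
    -- the quotient D / Z
    have hDq_ne : ∃ d : ↥D, (d : X) ∉ Z := by
      obtain ⟨d, hdD, hdZ⟩ := SetLike.exists_of_lt hZD
      exact ⟨⟨d, hdD⟩, hdZ⟩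
    haveI hDqNontrivial : Nontrivial (↥D ⧸ Z.subgroupOf D) := by
      obtain ⟨d, hd⟩ := hDq_ne
      refine ⟨QuotientGroup.mk d, 1, ?_⟩
      rw [ne_eq, QuotientGroup.eq_one_iff]
      simpa [Subgroup.mem_subgroupOf] using hd
    have hcorr : ∀ P : Subgroup ↥D, P.Normal → Z.subgroupOf D ≤ P →
        P = Z.subgroupOf D ∨ P = ⊤ := by
      intro P hPn hZP
      set M := P.map D.subtype with hM
      have hMD : M ≤ D := by rintro y ⟨z, hz, rfl⟩; exact z.2
      have hZM : Z ≤ M := by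
        intro z hz
        exact ⟨⟨z, hZD.le hz⟩, hZP (by simpa [Subgroup.mem_subgroupOf] using hz), rfl⟩
      have hMconj : ∀ d ∈ D, ∀ m ∈ M, d * m * d⁻¹ ∈ M := by
        rintro d hd m ⟨w, hw, rfl⟩
        exact ⟨(⟨d, hd⟩ : ↥D) * w * (⟨d, hd⟩ : ↥D)⁻¹, hPn.conj_mem w hw ⟨d, hd⟩, rfl⟩
      rcases minNorm M hMD hZM hMconj with h | h
      · left
        apply Subgroup.map_injective D.subtype_injective
        rw [← hM, h, Subgroup.subgroupOf_map_subtype, inf_of_le_left hZD.le]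
      · right
        apply Subgroup.map_injective D.subtype_injective
        rw [← hM, h, ← MonoidHom.range_eq_map, Subgroup.subtype_range]
    have hDqSimple : IsSimpleGroup (↥D ⧸ Z.subgroupOf D) := by
      constructor
      intro P hPn
      set Q := P.comap (QuotientGroup.mk' (Z.subgroupOf D)) with hQ
      have hQn : Q.Normal := hPn.comap _
      have hZQ : Z.subgroupOf D ≤ Q := by
        intro z hz
        have h1 : QuotientGroup.mk' (Z.subgroupOf D) z = 1 := by
          rw [← MonoidHom.mem_ker, QuotientGroup.ker_mk']
          exact hz
        rw [hQ, Subgroup.mem_comap, h1]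
        exact P.one_mem
      have hmapker : Subgroup.map (QuotientGroup.mk' (Z.subgroupOf D)) (Z.subgroupOf D) = ⊥ := by
        rw [eq_bot_iff]
        rintro y ⟨z, hz, rfl⟩
        rw [Subgroup.mem_bot, ← MonoidHom.mem_ker, QuotientGroup.ker_mk']
        exact hz
      rcases hcorr Q hQn hZQ with h | h
      · left
        have := congrArg (Subgroup.map (QuotientGroup.mk' (Z.subgroupOf D))) h
        rwa [Subgroup.map_comap_eq_self_of_surjective
          (QuotientGroup.mk'_surjective _), hmapker] at this
      · right
        have := congrArg (Subgroup.map (QuotientGroup.mk' (Z.subgroupOf D))) h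
        rwa [Subgroup.map_comap_eq_self_of_surjective (QuotientGroup.mk'_surjective _),
          Subgroup.map_top_of_surjective _ (QuotientGroup.mk'_surjective _)] at this
    have hDqnab : ¬ (∀ x y : ↥D ⧸ Z.subgroupOf D, x * y = y * x) := by
      intro hcomm'
      have hKZ' : K ≤ Z := by
        rw [hK]
        apply Subgroup.commutator_le.mpr
        intro g hg h hh
        have h1 : QuotientGroup.mk' (Z.subgroupOf D) ⁅(⟨g, hg⟩ : ↥D), (⟨h, hh⟩ : ↥D)⁆ = 1 := by
          rw [map_commutatorElement]
          exact commutatorElement_eq_one_iff_commute.mpr (hcomm' _ _)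
        rw [← MonoidHom.mem_ker, QuotientGroup.ker_mk', Subgroup.mem_subgroupOf] at h1
        simpa [commutatorElement_def] using h1
      have : Z = D := by
        rw [← hKZ, sup_eq_right.mpr hKZ']
      exact hZD.ne this
    -- the induced surjection from K
    set φ : ↥K →* ↥D ⧸ Z.subgroupOf D :=
      (QuotientGroup.mk' (Z.subgroupOf D)).comp (Subgroup.inclusion hKD) with hφ
    have hφs : Function.Surjective φ := by
      intro cq
      induction cq using QuotientGroup.induction_on with
      | H d =>
        have hd : (d : X) ∈ (K : Set X) * (Z : Set X) := by
          rw [← Subgroup.mul_normal, hKZ]; exact d.2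
        obtain ⟨k, hk, z, hz, hkz⟩ := hd
        refine ⟨⟨k, hk⟩, ?_⟩
        rw [hφ]
        simp only [MonoidHom.comp_apply, QuotientGroup.mk'_apply]
        rw [QuotientGroup.eq]
        rw [Subgroup.mem_subgroupOf]
        have hcoe : ((((Subgroup.inclusion hKD) (⟨k, hk⟩ : ↥K))⁻¹ * d : ↥D) : X)
            = k⁻¹ * (d : X) := by
          push_cast
          rw [Subgroup.coe_inclusion]
        rw [hcoe, ← hkz]
        simpa [inv_mul_cancel_left] using hz
    have hker : φ.ker = Subgroup.center ↥K := by
      apply le_antisymm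
      · intro k hk
        rw [MonoidHom.mem_ker, hφ, MonoidHom.comp_apply, QuotientGroup.mk'_apply,
          QuotientGroup.eq_one_iff, Subgroup.mem_subgroupOf, Subgroup.coe_inclusion] at hk
        rw [Subgroup.mem_center_iff]
        intro w
        apply Subtype.ext
        push_cast
        exact (hZcent _ hk _ (hKCz w.2)).symm
      · intro k hk
        by_contra hnk
        have himn : (Subgroup.map φ (Subgroup.center ↥K)).Normal :=
          Subgroup.Normal.map (inferInstance : (Subgroup.center ↥K).Normal) φ hφs
        rcases hDqSimple.eq_bot_or_eq_top_of_normal _ himn with hb | ht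
        · have : φ k ∈ Subgroup.map φ (Subgroup.center ↥K) := Subgroup.mem_map_of_mem _ hk
          rw [hb, Subgroup.mem_bot] at this
          exact hnk (MonoidHom.mem_ker.mpr this)
        · apply hDqnab
          intro x y
          have hx : x ∈ Subgroup.map φ (Subgroup.center ↥K) := ht.symm ▸ Subgroup.mem_top x
          have hy : y ∈ Subgroup.map φ (Subgroup.center ↥K) := ht.symm ▸ Subgroup.mem_top y
          obtain ⟨cx, hcx, rfl⟩ := hx
          obtain ⟨cy, hcy, rfl⟩ := hy
          rw [← map_mul, ← map_mul]
          exact congrArg φ (Subgroup.mem_center_iff.mp hcx cy).symm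
    have hKperf : ⁅(⊤ : Subgroup ↥K), (⊤ : Subgroup ↥K)⁆ = ⊤ := by
      apply Subgroup.map_injective K.subtype_injective
      rw [Subgroup.map_commutator, ← MonoidHom.range_eq_map, Subgroup.subtype_range]
      exact hcommKK
    have hKcomp : K.IsComponent := by
      refine ⟨hKsub, hKperf, ?_⟩
      have e1 : ↥K ⧸ Subgroup.center ↥K ≃* ↥D ⧸ Z.subgroupOf D :=
        (QuotientGroup.quotientMulEquivOfEq hker.symm).trans
          (QuotientGroup.quotientKerEquivOfSurjective φ hφs)
      exact isSimpleGroup_of_mulEquiv e1 hDqSimple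
    have hlayer : K ≤ layer X := fun x hx => Subgroup.subset_closure ⟨K, hKcomp, hx⟩
    rw [hE, le_bot_iff] at hlayer
    exact hKnebot hlayer

lemma commute_of_mem_coprime [Finite G] {H : Subgroup G} (hH : Group.IsNilpotent ↥H)
    {x y : G} (hx : x ∈ H) (hy : y ∈ H) (hcop : Nat.Coprime (orderOf x) (orderOf y)) :
    Commute x y := by
  have h1 : Nat.Coprime (orderOf (⟨x, hx⟩ : ↥H)) (orderOf (⟨y, hy⟩ : ↥H)) := by
    rwa [Subgroup.orderOf_mk, Subgroup.orderOf_mk]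
  exact Subtype.ext_iff.mp (commute_of_coprime_orderOf hH _ _ h1)

lemma conj_eq_of_commute {g x : G} (h : Commute g x) : g * x * g⁻¹ = x := by
  rw [h.eq]; group

end Auxiliary

/-- Let `X` be a finite group with `E(X) = 1`, and `I`, `J` subgroups of `X` such
that `I·F(X)` and `J·F(X)` are nilpotent.  If `p` and `q` are distinct primes,
then `[O_p(I), O_q(J)] = 1`. -/
theorem commutator_pCore_qCore_eq_bot
    {X : Type*} [Group X] [Finite X] (hE : layer X = ⊥)
    (I J : Subgroup X)
    (hI : Group.IsNilpotent ↥(I ⊔ fitting X)) (hJ : Group.IsNilpotent ↥(J ⊔ fitting X))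
    (p q : ℕ) (hp : p.Prime) (hq : q.Prime) (hpq : p ≠ q) :
    ⁅Subgroup.map I.subtype (pCore p I), Subgroup.map J.subtype (pCore q J)⁆ = ⊥ := by
  rw [Subgroup.commutator_eq_bot_iff_le_centralizer]
  intro a ha
  rw [Subgroup.mem_centralizer_iff]
  intro b hb
  -- setup
  set F := fitting X with hFdef
  have hFn : F.Normal := fitting_normal X
  have hCzF : Subgroup.centralizer (F : Set X) ≤ F := centralizer_fitting_le hE
  set Cz := Subgroup.centralizer (F : Set X) with hCzdef
  -- membership and torsion data for a and b
  have haI : a ∈ I := by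
    obtain ⟨a₀, _, rfl⟩ := ha
    exact a₀.2
  have hbJ : b ∈ J := by
    obtain ⟨b₀, _, rfl⟩ := hb
    exact b₀.2
  have hat : ∃ k : ℕ, a ^ p ^ k = 1 := by
    obtain ⟨a₀, ha₀, rfl⟩ := ha
    obtain ⟨k, hk⟩ := pCore_pow_eq_one ha₀
    exact ⟨k, coe_pow_eq_one hk⟩
  have hbt : ∃ l : ℕ, b ^ q ^ l = 1 := by
    obtain ⟨b₀, hb₀, rfl⟩ := hb
    obtain ⟨l, hl⟩ := pCore_pow_eq_one hb₀
    exact ⟨l, coe_pow_eq_one hl⟩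
  obtain ⟨k, hak⟩ := hat
  obtain ⟨l, hbl⟩ := hbt
  have hadvd : orderOf a ∣ p ^ k := orderOf_dvd_of_pow_eq_one hak
  have hbdvd : orderOf b ∣ q ^ l := orderOf_dvd_of_pow_eq_one hbl
  -- commuting criteria
  have haF : ∀ f ∈ F, Nat.Coprime (orderOf f) p → Commute a f := by
    intro f hf hcop
    refine commute_of_mem_coprime hI (Subgroup.mem_sup_left haI) (Subgroup.mem_sup_right hf) ?_
    exact Nat.Coprime.coprime_dvd_left hadvd ((hcop.symm).pow_left k)
  have hbF : ∀ f ∈ F, Nat.Coprime (orderOf f) q → Commute b f := by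
    intro f hf hcop
    refine commute_of_mem_coprime hJ (Subgroup.mem_sup_left hbJ) (Subgroup.mem_sup_right hf) ?_
    exact Nat.Coprime.coprime_dvd_left hbdvd ((hcop.symm).pow_left l)
  have hppq : Nat.Coprime p q := (Nat.coprime_primes hp hq).mpr hpq
  -- p-torsion elements of F commute with b ; q'-p'-torsion with both
  -- Step 1 : the commutator centralizes F
  have hconjAll : ∀ f ∈ F, (a * b) * f * (a * b)⁻¹ = (b * a) * f * (b * a)⁻¹ := by
    intro f hf
    obtain ⟨y, z₀, hfyz, hyz, hz₀z, hyt, hz₀c⟩ := exists_p_part hp f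
    obtain ⟨z, w, hz₀zw, hzz, hwz, hzt, hwc⟩ := exists_p_part hq z₀
    have hyF : y ∈ F := (Subgroup.zpowers_le.mpr hf) hyz
    have hz₀F : z₀ ∈ F := (Subgroup.zpowers_le.mpr hf) hz₀z
    have hzF : z ∈ F := (Subgroup.zpowers_le.mpr hz₀F) hzz
    have hwF : w ∈ F := (Subgroup.zpowers_le.mpr hz₀F) hwz
    obtain ⟨j, hyj⟩ := hyt
    have hydvd : orderOf y ∣ p ^ j := orderOf_dvd_of_pow_eq_one hyj
    obtain ⟨i, hzi⟩ := hzt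
    have hzdvd : orderOf z ∣ q ^ i := orderOf_dvd_of_pow_eq_one hzi
    have hzcp : Nat.Coprime (orderOf z) p :=
      Nat.Coprime.coprime_dvd_left (orderOf_dvd_of_mem_zpowers hzz) hz₀c
    have hwcp : Nat.Coprime (orderOf w) p :=
      Nat.Coprime.coprime_dvd_left (orderOf_dvd_of_mem_zpowers hwz) hz₀c
    have hycq : Nat.Coprime (orderOf y) q :=
      Nat.Coprime.coprime_dvd_left hydvd (hppq.pow_left j)
    -- the conjugated pieces
    set y' := a * y * a⁻¹ with hy'
    set z' := b * z * b⁻¹ with hz'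
    have hy'F : y' ∈ F := hFn.conj_mem y hyF a
    have hz'F : z' ∈ F := hFn.conj_mem z hzF b
    have hy'ord : orderOf y' = orderOf y := by
      have := orderOf_injective (MulAut.conj a).toMonoidHom
        (MulAut.conj a).injective y
      simpa [MulAut.conj_apply] using this
    have hz'ord : orderOf z' = orderOf z := by
      have := orderOf_injective (MulAut.conj b).toMonoidHom
        (MulAut.conj b).injective z
      simpa [MulAut.conj_apply] using this
    -- all the needed commutation facts
    have cay : a * y * a⁻¹ = y' := rfl
    have cbz : b * z * b⁻¹ = z' := rfl
    have cby : b * y * b⁻¹ = y := conj_eq_of_commute (hbF y hyF hycq)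
    have cbw : b * w * b⁻¹ = w := conj_eq_of_commute (hbF w hwF hwc)
    have caz : a * z * a⁻¹ = z := conj_eq_of_commute (haF z hzF hzcp)
    have caw : a * w * a⁻¹ = w := conj_eq_of_commute (haF w hwF hwcp)
    have caz' : a * z' * a⁻¹ = z' :=
      conj_eq_of_commute (haF z' hz'F (hz'ord ▸ hzcp))
    have cby' : b * y' * b⁻¹ = y' :=
      conj_eq_of_commute (hbF y' hy'F (hy'ord ▸ hycq))
    have hfe : f = y * (z * w) := by rw [hfyz, hz₀zw]
    have h_bf : b * f * b⁻¹ = y * (z' * w) := by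
      rw [hfe]
      calc b * (y * (z * w)) * b⁻¹
          = (b * y * b⁻¹) * ((b * z * b⁻¹) * (b * w * b⁻¹)) := by group
      _ = y * (z' * w) := by rw [cby, cbz, cbw]
    have h_abf : a * (y * (z' * w)) * a⁻¹ = y' * (z' * w) := by
      calc a * (y * (z' * w)) * a⁻¹
          = (a * y * a⁻¹) * ((a * z' * a⁻¹) * (a * w * a⁻¹)) := by group
      _ = y' * (z' * w) := by rw [cay, caz', caw]
    have h_af : a * f * a⁻¹ = y' * (z * w) := by
      rw [hfe]
      calc a * (y * (z * w)) * a⁻¹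
          = (a * y * a⁻¹) * ((a * z * a⁻¹) * (a * w * a⁻¹)) := by group
      _ = y' * (z * w) := by rw [cay, caz, caw]
    have h_baf : b * (y' * (z * w)) * b⁻¹ = y' * (z' * w) := by
      calc b * (y' * (z * w)) * b⁻¹
          = (b * y' * b⁻¹) * ((b * z * b⁻¹) * (b * w * b⁻¹)) := by group
      _ = y' * (z' * w) := by rw [cby', cbz, cbw]
    calc (a * b) * f * (a * b)⁻¹
        = a * (b * f * b⁻¹) * a⁻¹ := by group
    _ = a * (y * (z' * w)) * a⁻¹ := by rw [h_bf]
    _ = y' * (z' * w) := h_abf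
    _ = b * (y' * (z * w)) * b⁻¹ := h_baf.symm
    _ = b * (a * f * a⁻¹) * b⁻¹ := by rw [h_af]
    _ = (b * a) * f * (b * a)⁻¹ := by group
  set c := ⁅a, b⁆ with hc
  have hcCz : c ∈ Cz := by
    rw [hCzdef, Subgroup.mem_centralizer_iff]
    intro f hf
    have hf' : (b * a)⁻¹ * f * (b * a) ∈ F := by
      simpa using hFn.conj_mem f hf (b * a)⁻¹
    have h1 := hconjAll _ hf'
    have h2 : (b * a) * ((b * a)⁻¹ * f * (b * a)) * (b * a)⁻¹ = f := by group
    rw [h2] at h1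
    have h3 : c * f * c⁻¹ = f := by
      calc c * f * c⁻¹ = (a * b) * ((b * a)⁻¹ * f * (b * a)) * (a * b)⁻¹ := by
            rw [hc]; simp only [commutatorElement_def]; group
      _ = f := h1
    calc f * c = (c * f * c⁻¹) * c := by rw [h3]
    _ = c * f := by group
  have hcF : c ∈ F := hCzF hcCz
  -- elements of Cz commute with each other
  have hCzcomm : ∀ x y : X, x ∈ Cz → y ∈ Cz → Commute x y := by
    intro x y hx hy
    exact ((Subgroup.mem_centralizer_iff.mp hx) y (hCzF hy)).symm
  -- the p'-torsion subgroup of Cz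
  set Kp : Subgroup X :=
    { carrier := {x : X | x ∈ Cz ∧ Nat.Coprime (orderOf x) p}
      one_mem' := ⟨one_mem _, by simp⟩
      mul_mem' := by
        rintro x y ⟨hx1, hx2⟩ ⟨hy1, hy2⟩
        refine ⟨mul_mem hx1 hy1, ?_⟩
        have hcxy : Commute x y := hCzcomm x y hx1 hy1
        exact Nat.Coprime.coprime_dvd_left
          (hcxy.orderOf_mul_dvd_lcm.trans (Nat.lcm_dvd_mul _ _)) (hx2.mul hy2)
      inv_mem' := by
        rintro x ⟨h1, h2⟩
        exact ⟨inv_mem h1, by rwa [orderOf_inv]⟩ } with hKp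
  have hKpmem : ∀ x : X, x ∈ Kp ↔ x ∈ Cz ∧ Nat.Coprime (orderOf x) p := fun x => Iff.rfl
  have hCzn : Cz.Normal := by
    constructor
    intro n hn g
    rw [hCzdef, Subgroup.mem_centralizer_iff] at hn ⊢
    intro h hh
    have hg : g⁻¹ * h * g ∈ F := by
      simpa using hFn.conj_mem h hh g⁻¹
    have hnh := hn _ hg
    calc h * (g * n * g⁻¹) = g * ((g⁻¹ * h * g) * n) * g⁻¹ := by group
    _ = g * (n * (g⁻¹ * h * g)) * g⁻¹ := by rw [hnh]
    _ = g * n * g⁻¹ * h := by group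
  haveI hKpn : Kp.Normal := by
    constructor
    intro n hn g
    rw [hKpmem] at hn ⊢
    refine ⟨hCzn.conj_mem n hn.1 g, ?_⟩
    have : orderOf (g * n * g⁻¹) = orderOf n := by
      have := orderOf_injective (MulAut.conj g).toMonoidHom (MulAut.conj g).injective n
      simpa [MulAut.conj_apply] using this
    rw [this]
    exact hn.2
  -- decompose c into p-part and p'-part
  obtain ⟨cp, cw, hcpw, hcpz, hcwz, hcpt, hcwc⟩ := exists_p_part hp c
  have hcpF : cp ∈ F := (Subgroup.zpowers_le.mpr hcF) hcpz
  have hcpCz : cp ∈ Cz := (Subgroup.zpowers_le.mpr hcCz) hcpz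
  have hcwCz : cw ∈ Cz := (Subgroup.zpowers_le.mpr hcCz) hcwz
  have hcwKp : cw ∈ Kp := ⟨hcwCz, hcwc⟩
  obtain ⟨m, hcpm⟩ := hcpt
  have hcpdvd : orderOf cp ∣ p ^ m := orderOf_dvd_of_pow_eq_one hcpm
  -- b commutes with the p-part of c
  have hbcp : Commute b cp :=
    hbF cp hcpF (Nat.Coprime.coprime_dvd_left hcpdvd (hppq.pow_left m))
  -- the commutator of c and b lies in Kp
  have hcbKp : ⁅c, b⁆ ∈ Kp := by
    have hsplit : ⁅c, b⁆ = cp * (cw * (b * cw⁻¹ * b⁻¹)) * cp⁻¹ := by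
      have hbcp' : cp⁻¹ * b⁻¹ = b⁻¹ * cp⁻¹ := (hbcp.inv_inv).eq.symm
      calc ⁅c, b⁆ = c * b * c⁻¹ * b⁻¹ := rfl
      _ = cp * cw * b * cw⁻¹ * (cp⁻¹ * b⁻¹) := by
          rw [hcpw]; group
      _ = cp * cw * b * cw⁻¹ * (b⁻¹ * cp⁻¹) := by rw [hbcp']
      _ = cp * (cw * (b * cw⁻¹ * b⁻¹)) * cp⁻¹ := by group
    rw [hsplit]
    apply hKpn.conj_mem
    apply Kp.mul_mem hcwKp
    refine ⟨hCzn.conj_mem _ (inv_mem hcwCz) b, ?_⟩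
    have : orderOf (b * cw⁻¹ * b⁻¹) = orderOf cw⁻¹ := by
      have := orderOf_injective (MulAut.conj b).toMonoidHom (MulAut.conj b).injective cw⁻¹
      simpa [MulAut.conj_apply] using this
    rw [this, orderOf_inv]
    exact hcwc
  -- pass to the quotient X / Kp
  set π := QuotientGroup.mk' Kp with hπ
  have hπcb : ⁅π a, π b⁆ = π c := by rw [hc, map_commutatorElement]
  have hcomm_cb : Commute (π c) (π b) := by
    apply commutatorElement_eq_one_iff_commute.mp
    have : π ⁅c, b⁆ = 1 := by
      rw [← MonoidHom.mem_ker, QuotientGroup.ker_mk']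
      exact hcbKp
    rwa [map_commutatorElement] at this
  have hq1 : (π c) ^ q ^ l = 1 := by
    have h1 : Commute ⁅π a, π b⁆ (π b) := hπcb ▸ hcomm_cb
    have h2 := comm_pow_right (π a) (π b) h1 (q ^ l)
    rw [hπcb] at h2
    rw [← h2, ← map_pow, hbl, map_one]
    simp
  have hp1 : (π c) ^ p ^ m = 1 := by
    have hπcw : π cw = 1 := by
      rw [← MonoidHom.mem_ker, QuotientGroup.ker_mk']
      exact hcwKp
    have : π c = π cp := by rw [hcpw, map_mul, hπcw, mul_one]
    rw [this, ← map_pow, hcpm, map_one]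
  have hπc1 : π c = 1 := by
    apply orderOf_eq_one_iff.mp
    have h1 : orderOf (π c) ∣ p ^ m := orderOf_dvd_of_pow_eq_one hp1
    have h2 : orderOf (π c) ∣ q ^ l := orderOf_dvd_of_pow_eq_one hq1
    have hcop : Nat.Coprime (p ^ m) (q ^ l) := Nat.Coprime.pow m l hppq
    exact Nat.eq_one_of_dvd_one (hcop ▸ Nat.dvd_gcd h1 h2)
  have hcKp : c ∈ Kp := by
    rw [← QuotientGroup.ker_mk' Kp, MonoidHom.mem_ker]
    exact hπc1
  -- a commutes with c, finish
  have hac : Commute a c := haF c (hCzF hcKp.1) hcKp.2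
  have hfin : c ^ p ^ k = 1 := by
    have h1 : Commute ⁅a, b⁆ a := hc ▸ hac.symm
    have h2 := comm_pow_left a b h1 (p ^ k)
    rw [← hc] at h2
    rw [← h2, hak]
    simp
  have hc1 : c = 1 := orderOf_eq_one_iff.mp
    (Nat.Coprime.eq_one_of_dvd ((hcKp.2).pow_right k) (orderOf_dvd_of_pow_eq_one hfin))
  have : Commute a b := commutatorElement_eq_one_iff_commute.mp (hc ▸ hc1)
  exact this.symm.eq
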